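/- arXiv:2101.04555 — 4 statements merged into one kernel-verified Lean document; each statement's English description precedes it below -/
import Mathlib

section
/- (Hahn–Banach extension in linear n-normed spaces) Let X be a separable real linear n-normed space, W a subspace of X, and T_W a bounded b-linear functional on W × ⟨b₂⟩ × ⋯ × ⟨bₙ⟩. Then there exists a bounded b-linear functional T on X × ⟨b₂⟩ × ⋯ × ⟨bₙ⟩ such that T(x, b₂,…,bₙ) = T_W(x, b₂,…,bₙ) for all x ∈ W and ‖T‖ = ‖T_W‖. -/
noncomputable section
open Filter Topology

/-- A linear `n+1`-normed space over `𝕜` (real or complex): an `(n+1)`-norm on `X`. -/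
structure NNormSp (n : ℕ) (𝕜 : Type*) (X : Type*) [RCLike 𝕜] [AddCommGroup X] [Module 𝕜 X] where
  N : (Fin (n + 1) → X) → ℝ
  eq_zero_iff : ∀ v : Fin (n + 1) → X, N v = 0 ↔ ¬ LinearIndependent 𝕜 v
  perm_invariant : ∀ (v : Fin (n + 1) → X) (σ : Equiv.Perm (Fin (n + 1))), N (v ∘ σ) = N v
  smul_first : ∀ (α : 𝕜) (x : X) (a : Fin n → X), N (Fin.cons (α • x) a) = ‖α‖ * N (Fin.cons x a)
  add_first : ∀ (x y : X) (a : Fin n → X),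
    N (Fin.cons (x + y) a) ≤ N (Fin.cons x a) + N (Fin.cons y a)

namespace NNormSp

variable {n : ℕ} {𝕜 X : Type*} [RCLike 𝕜] [AddCommGroup X] [Module 𝕜 X]

/-- Convergence of a sequence in a linear n-normed space. -/
def TendstoSeq (S : NNormSp n 𝕜 X) (x : ℕ → X) (l : X) : Prop :=
  ∀ a : Fin n → X, Tendsto (fun k => S.N (Fin.cons (x k - l) a)) atTop (𝓝 0)

/-- Cauchy sequence in a linear n-normed space. -/
def CauchySeqN (S : NNormSp n 𝕜 X) (x : ℕ → X) : Prop :=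
  ∀ a : Fin n → X, Tendsto (fun p : ℕ × ℕ => S.N (Fin.cons (x p.1 - x p.2) a)) atTop (𝓝 0)

/-- An n-Banach space: every Cauchy sequence converges. -/
def Complete (S : NNormSp n 𝕜 X) : Prop :=
  ∀ x : ℕ → X, S.CauchySeqN x → ∃ l, S.TendstoSeq x l

/-- Boundedness of a b-linear functional with respect to the fixed tuple `b`. -/
def IsBounded (S : NNormSp n 𝕜 X) (b : Fin n → X) (T : X → 𝕜) : Prop :=
  ∃ M > (0 : ℝ), ∀ x : X, ‖T x‖ ≤ M * S.N (Fin.cons x b)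

/-- The norm of a bounded b-linear functional. -/
def opNorm (S : NNormSp n 𝕜 X) (b : Fin n → X) (T : X → 𝕜) : ℝ :=
  sInf {M : ℝ | 0 < M ∧ ∀ x : X, ‖T x‖ ≤ M * S.N (Fin.cons x b)}

/-- Continuity of a functional at a point, in the open-ball sense. -/
def ContAt (S : NNormSp n 𝕜 X) (T : X → 𝕜) (x₀ : X) : Prop :=
  ∀ ε > (0 : ℝ), ∃ (e : Fin n → X) (δ : ℝ), 0 < δ ∧
    ∀ x : X, S.N (Fin.cons (x - x₀) e) < δ → ‖T x - T x₀‖ < ε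

end NNormSp

/-- A b-linear functional: additive and homogeneous in its first argument. -/
def IsBLinear {𝕜 X : Type*} [RCLike 𝕜] [AddCommGroup X] [Module 𝕜 X] (T : X → 𝕜) : Prop :=
  (∀ x y : X, T (x + y) = T x + T y) ∧ ∀ (c : 𝕜) (x : X), T (c • x) = c * T x

section Aux
variable {n : ℕ} {X : Type*} [AddCommGroup X] [Module ℝ X]

lemma NNormSp.zero_first (S : NNormSp n ℝ X) (a : Fin n → X) :
    S.N (Fin.cons 0 a) = 0 := by
  rw [S.eq_zero_iff]
  intro h
  exact h.ne_zero 0 (by simp)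

lemma NNormSp.neg_first (S : NNormSp n ℝ X) (x : X) (a : Fin n → X) :
    S.N (Fin.cons (-x) a) = S.N (Fin.cons x a) := by
  have := S.smul_first (-1 : ℝ) x a
  simpa using this

lemma NNormSp.nonneg (S : NNormSp n ℝ X) (x : X) (a : Fin n → X) :
    0 ≤ S.N (Fin.cons x a) := by
  have h := S.add_first x (-x) a
  rw [add_neg_cancel, S.zero_first, S.neg_first] at h
  linarith

end Aux

theorem hahn_banach_extension
    {n : ℕ} {X : Type*} [AddCommGroup X] [Module ℝ X]
    (S : NNormSp n ℝ X)
    (hsep : ∃ D : Set X, D.Countable ∧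
      ∀ x : X, ∃ y : ℕ → X, (∀ k, y k ∈ D) ∧ S.TendstoSeq y x)
    (b : Fin n → X) (W : Submodule ℝ X) (TW : W → ℝ)
    (hlin : (∀ x y : W, TW (x + y) = TW x + TW y) ∧
      ∀ (c : ℝ) (x : W), TW (c • x) = c * TW x)
    (hbd : ∃ M > (0 : ℝ), ∀ x : W, ‖TW x‖ ≤ M * S.N (Fin.cons (x : X) b)) :
    ∃ T : X → ℝ, IsBLinear T ∧ S.IsBounded b T ∧
      (∀ x : W, T (x : X) = TW x) ∧
      S.opNorm b T =
        sInf {M : ℝ | 0 < M ∧ ∀ x : W, ‖TW x‖ ≤ M * S.N (Fin.cons (x : X) b)} := by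
  classical
  set A : Set ℝ := {M : ℝ | 0 < M ∧ ∀ x : W, ‖TW x‖ ≤ M * S.N (Fin.cons (x : X) b)} with hA
  obtain ⟨M₀, hM₀pos, hM₀⟩ := hbd
  have hAne : A.Nonempty := ⟨M₀, hM₀pos, hM₀⟩
  have hAbdd : BddBelow A := ⟨0, fun M hM => le_of_lt hM.1⟩
  set I := sInf A with hI
  have hI0 : 0 ≤ I := le_csInf hAne fun M hM => le_of_lt hM.1
  -- key bound with the infimum
  have hWI : ∀ x : W, ‖TW x‖ ≤ I * S.N (Fin.cons (x : X) b) := by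
    intro x
    rcases eq_or_lt_of_le (S.nonneg (x : X) b) with h0 | hpos
    · have : ‖TW x‖ ≤ 0 := by
        have := hM₀ x
        rw [← h0] at this
        simpa using this
      rw [← h0]
      simpa using this
    · rw [← div_le_iff₀ hpos] at *
      refine le_csInf hAne fun M hM => ?_
      rw [div_le_iff₀ hpos]
      exact hM.2 x
  -- Hahn-Banach extension with sublinear functional p x = I * N(x,b)
  let g : W →ₗ[ℝ] ℝ :=
    { toFun := TW, map_add' := hlin.1, map_smul' := fun c x => hlin.2 c x }
  obtain ⟨T, hTeq, hTle⟩ := exists_extension_of_le_sublinear ⟨W, g⟩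
    (fun x => I * S.N (Fin.cons x b))
    (fun c hc x => by
      show I * S.N (Fin.cons (c • x) b) = c * (I * S.N (Fin.cons x b))
      rw [S.smul_first c x b, Real.norm_eq_abs, abs_of_pos hc]; ring)
    (fun x y => by
      show I * S.N (Fin.cons (x + y) b) ≤
        I * S.N (Fin.cons x b) + I * S.N (Fin.cons y b)
      have := S.add_first x y b
      nlinarith [S.nonneg x b, S.nonneg y b])
    (fun x => le_trans (le_abs_self _) (hWI x))
  have habs : ∀ x : X, |T x| ≤ I * S.N (Fin.cons x b) := by
    intro x
    rcases abs_cases (T x) with ⟨h, _⟩ | ⟨h, _⟩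
    · rw [h]; exact hTle x
    · rw [h]
      have h2 := hTle (-x)
      rw [map_neg] at h2
      rw [S.neg_first x b] at h2
      linarith
  have hext : ∀ x : W, T (x : X) = TW x := fun x => hTeq x
  refine ⟨T, ⟨fun x y => map_add T x y, fun c x => by rw [map_smul]; rfl⟩, ?_, hext, ?_⟩
  · exact ⟨I + 1, by linarith, fun x => by
      have := habs x
      have hN := S.nonneg x b
      rw [Real.norm_eq_abs]
      nlinarith⟩
  · -- opNorm equality
    set B : Set ℝ := {M : ℝ | 0 < M ∧ ∀ x : X, ‖T x‖ ≤ M * S.N (Fin.cons x b)} with hB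
    have hBsubA : B ⊆ A := fun M hM => ⟨hM.1, fun x => by
      have := hM.2 (x : X)
      rwa [hext x] at this⟩
    have hBne : B.Nonempty := ⟨I + 1, by linarith, fun x => by
      have := habs x
      have hN := S.nonneg x b
      rw [Real.norm_eq_abs]
      nlinarith⟩
    have h1 : I ≤ sInf B := le_csInf hBne fun M hM => csInf_le hAbdd (hBsubA hM)
    have h2 : sInf B ≤ I := by
      rcases eq_or_lt_of_le hI0 with h0 | hIpos
      · have : ∀ ε > (0:ℝ), sInf B ≤ ε := by
          intro ε hε
          refine csInf_le ⟨0, fun M hM => le_of_lt hM.1⟩ ⟨hε, fun x => ?_⟩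
          have := habs x
          have hN := S.nonneg x b
          rw [Real.norm_eq_abs]
          nlinarith
        rw [← h0]
        exact le_of_forall_pos_le_add fun ε hε => by simpa using this ε hε
      · exact csInf_le ⟨0, fun M hM => le_of_lt hM.1⟩
          ⟨hIpos, fun x => by rw [Real.norm_eq_abs]; exact habs x⟩
    exact le_antisymm h2 h1
end
end

section
/- Let X be a real linear n-normed space and x₀ a nonzero element of X with ‖x₀, b₂,…,bₙ‖ ≠ 0. Then there exists a bounded b-linear functional T on X × ⟨b₂⟩ × ⋯ × ⟨bₙ⟩ with ‖T‖ = 1 and T(x₀, b₂,…,bₙ) = ‖x₀, b₂,…,bₙ‖. -/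
noncomputable section
open Filter Topology

theorem norming_functional_exists
    {n : ℕ} {X : Type*} [AddCommGroup X] [Module ℝ X]
    (S : NNormSp n ℝ X) (b : Fin n → X) (x₀ : X) (hx₀ : x₀ ≠ 0)
    (hN : S.N (Fin.cons x₀ b) ≠ 0) :
    ∃ T : X → ℝ, IsBLinear T ∧ S.IsBounded b T ∧
      S.opNorm b T = 1 ∧ T x₀ = S.N (Fin.cons x₀ b) := by
  set p : X → ℝ := fun x => S.N (Fin.cons x b) with hp
  have hsmul : ∀ (c : ℝ) (x : X), p (c • x) = |c| * p x := by
    intro c x; simpa using S.smul_first c x b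
  have hadd : ∀ x y : X, p (x + y) ≤ p x + p y := fun x y => S.add_first x y b
  have hnonneg : ∀ x, 0 ≤ p x := by
    intro x
    have h0 : p (0 : X) = 0 := by
      have := hsmul 0 x; simpa using this
    have : p (x + (-1 : ℝ) • x) ≤ p x + p ((-1 : ℝ) • x) := hadd _ _
    rw [hsmul] at this
    simp only [abs_neg, abs_one, one_mul] at this
    have hx : x + (-1 : ℝ) • x = 0 := by simp
    rw [hx, h0] at this
    linarith
  have hpx₀ : 0 < p x₀ := lt_of_le_of_ne (hnonneg x₀) (Ne.symm hN)
  -- partial linear map on span of x₀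
  set f : X →ₗ.[ℝ] ℝ := LinearPMap.mkSpanSingleton x₀ (p x₀) hx₀ with hf
  have hfle : ∀ x : f.domain, f x ≤ p x := by
    rintro ⟨x, hx⟩
    rw [LinearPMap.domain_mkSpanSingleton] at hx
    obtain ⟨c, rfl⟩ := Submodule.mem_span_singleton.mp hx
    have hval := LinearPMap.mkSpanSingleton'_apply (σ := RingHom.id ℝ) x₀ (p x₀)
      (fun c hc => by
        rcases smul_eq_zero.mp hc with h | h
        · simp [h]
        · exact absurd h hx₀) c hx
    rw [hval, hsmul]
    calc c • p x₀ = c * p x₀ := rfl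
      _ ≤ |c| * p x₀ := by
        apply mul_le_mul_of_nonneg_right (le_abs_self c) (le_of_lt hpx₀)
  obtain ⟨g, hg, hgle⟩ := exists_extension_of_le_sublinear f p
    (fun c hc x => by rw [hsmul, abs_of_pos hc]) hadd hfle
  have habs : ∀ x, |g x| ≤ p x := by
    intro x
    rcases abs_cases (g x) with ⟨h, _⟩ | ⟨h, _⟩
    · rw [h]; exact hgle x
    · rw [h]
      have := hgle (-x)
      rw [map_neg] at this
      have hpx : p (-x) = p x := by
        have := hsmul (-1) x; simpa using this
      linarith
  have hgx₀ : g x₀ = p x₀ := by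
    have := hg ⟨x₀, by rw [LinearPMap.domain_mkSpanSingleton]; exact Submodule.mem_span_singleton_self x₀⟩
    rw [this, LinearPMap.mkSpanSingleton_apply]
  refine ⟨g, ⟨fun x y => map_add g x y, fun c x => map_smul g c x⟩, ⟨1, one_pos, fun x => by
    simpa using habs x⟩, ?_, hgx₀⟩
  -- opNorm = 1
  have hset : {M : ℝ | 0 < M ∧ ∀ x : X, ‖g x‖ ≤ M * S.N (Fin.cons x b)} =
      {M : ℝ | 0 < M ∧ ∀ x : X, ‖g x‖ ≤ M * p x} := rfl
  apply le_antisymm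
  · apply csInf_le
    · refine ⟨1, fun M hM => ?_⟩
      have h := hM.2 x₀
      rw [Real.norm_eq_abs, hgx₀, abs_of_pos hpx₀] at h
      have h2 : p x₀ ≤ M * p x₀ := h
      nlinarith
    · exact ⟨one_pos, fun x => by simpa using habs x⟩
  · apply le_csInf
    · exact ⟨1, one_pos, fun x => by simpa using habs x⟩
    · intro M hM
      have h := hM.2 x₀
      rw [Real.norm_eq_abs, hgx₀, abs_of_pos hpx₀] at h
      have h2 : p x₀ ≤ M * p x₀ := h
      nlinarith
end
end

section
/- Let X be a real linear n-normed space and x ∈ X with ‖x, b₂,…,bₙ‖ ≠ 0. Then ‖x, b₂,…,bₙ‖ = sup{ |T(x, b₂,…,bₙ)| / ‖T‖ : T a nonzero bounded b-linear functional on X × ⟨b₂⟩ × ⋯ × ⟨bₙ⟩ }. -/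
noncomputable section
open Filter Topology

theorem nnorm_eq_sup_over_functionals
    {n : ℕ} {X : Type*} [AddCommGroup X] [Module ℝ X]
    (S : NNormSp n ℝ X) (b : Fin n → X) (x : X)
    (hN : S.N (Fin.cons x b) ≠ 0) :
    S.N (Fin.cons x b) =
      sSup {r : ℝ | ∃ T : X → ℝ, IsBLinear T ∧ S.IsBounded b T ∧ T ≠ 0 ∧
        r = ‖T x‖ / S.opNorm b T} := by
  set p : X → ℝ := fun y => S.N (Fin.cons y b) with hp
  have hzero : p 0 = 0 := by
    rw [hp]; dsimp only
    rw [S.eq_zero_iff]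
    intro h
    exact h.ne_zero 0 (by simp)
  have hneg : ∀ y, p (-y) = p y := by
    intro y
    have := S.smul_first (-1 : ℝ) y b
    simpa [hp] using this
  have hnonneg : ∀ y, 0 ≤ p y := by
    intro y
    have h := S.add_first y (-y) b
    have h2 : p 0 ≤ p y + p (-y) := by simpa [hp] using h
    rw [hzero, hneg] at h2; linarith
  have hpx : 0 < p x := lt_of_le_of_ne (hnonneg x) (Ne.symm hN)
  have hhom : ∀ c : ℝ, 0 < c → ∀ y, p (c • y) = c * p y := by
    intro c hc y
    have := S.smul_first c y b
    simpa [hp, abs_of_pos hc] using this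
  have hadd : ∀ y z, p (y + z) ≤ p y + p z := fun y z => S.add_first y z b
  have hx0 : x ≠ 0 := by
    rintro rfl; exact hN hzero
  -- extend the functional t • x ↦ t * p x by Hahn-Banach
  have hf : ∀ z : (LinearPMap.mkSpanSingleton (K := ℝ) (L := ℝ) (σ := RingHom.id ℝ) x (p x) hx0).domain,
      (LinearPMap.mkSpanSingleton (K := ℝ) (L := ℝ) (σ := RingHom.id ℝ) x (p x) hx0) z ≤ p z := by
    rintro ⟨z, hz⟩
    rw [LinearPMap.domain_mkSpanSingleton, Submodule.mem_span_singleton] at hz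
    obtain ⟨c, rfl⟩ := hz
    rw [LinearPMap.mkSpanSingleton'_apply]
    have hsc : p (c • x) = |c| * p x := by
      have := S.smul_first c x b
      simpa [hp] using this
    rw [hsc]
    calc c • p x = c * p x := rfl
      _ ≤ |c| * p x := mul_le_mul_of_nonneg_right (le_abs_self c) (le_of_lt hpx)
  obtain ⟨g, hg1, hg2⟩ := exists_extension_of_le_sublinear
      (LinearPMap.mkSpanSingleton x (p x) hx0) p hhom hadd hf
  · have hgx : g x = p x := by
      have := hg1 ⟨x, Submodule.mem_span_singleton_self x⟩
      rwa [LinearPMap.mkSpanSingleton_apply] at this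
    have habs : ∀ y, |g y| ≤ p y := by
      intro y
      rcases abs_cases (g y) with ⟨h, _⟩ | ⟨h, _⟩
      · rw [h]; exact hg2 y
      · rw [h]
        have := hg2 (-y)
        rw [map_neg, hneg] at this
        linarith
    -- key bound: for any admissible T, ‖T x‖ / opNorm ≤ p x
    have key : ∀ T : X → ℝ, IsBLinear T → S.IsBounded b T → T ≠ 0 →
        ‖T x‖ / S.opNorm b T ≤ p x := by
      intro T _ hTb hTne
      set A : Set ℝ := {M : ℝ | 0 < M ∧ ∀ y : X, ‖T y‖ ≤ M * S.N (Fin.cons y b)} with hA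
      obtain ⟨M₀, hM₀pos, hM₀⟩ := hTb
      have hAne : A.Nonempty := ⟨M₀, hM₀pos, hM₀⟩
      -- opNorm T > 0
      obtain ⟨y, hy⟩ : ∃ y, T y ≠ 0 := by
        by_contra h; push_neg at h; exact hTne (funext h)
      have hTy : 0 < ‖T y‖ := norm_pos_iff.mpr hy
      have hpy : 0 < p y := by
        have := hM₀ y
        by_contra h
        push_neg at h
        have : ‖T y‖ ≤ M₀ * p y := hM₀ y
        nlinarith
      have hop_pos : 0 < S.opNorm b T := by
        have h1 : ‖T y‖ / p y ≤ sInf A := by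
          apply le_csInf hAne
          intro M hM
          rw [div_le_iff₀ hpy]
          exact le_trans (hM.2 y) (by rw [mul_comm])
        have : 0 < ‖T y‖ / p y := div_pos hTy hpy
        exact lt_of_lt_of_le this h1
      have hbound : ‖T x‖ ≤ S.opNorm b T * p x := by
        have h1 : ‖T x‖ / p x ≤ sInf A := by
          apply le_csInf hAne
          intro M hM
          rw [div_le_iff₀ hpx]
          exact le_trans (hM.2 x) (by rw [mul_comm])
        calc ‖T x‖ = ‖T x‖ / p x * p x := by field_simp
          _ ≤ sInf A * p x := by
              exact mul_le_mul_of_nonneg_right h1 (le_of_lt hpx)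
      rw [div_le_iff₀ hop_pos]
      calc ‖T x‖ ≤ S.opNorm b T * p x := hbound
        _ = p x * S.opNorm b T := mul_comm _ _
    -- the constructed g attains the value p x
    have hgmem : p x ∈ {r : ℝ | ∃ T : X → ℝ, IsBLinear T ∧ S.IsBounded b T ∧ T ≠ 0 ∧
        r = ‖T x‖ / S.opNorm b T} := by
      refine ⟨g, ⟨fun a c => map_add g a c, fun c a => by rw [map_smul]; rfl⟩, ⟨1, one_pos,
        fun y => by rw [one_mul, Real.norm_eq_abs]; exact habs y⟩, ?_, ?_⟩
      · intro h
        apply hN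
        have : g x = 0 := by rw [h]; rfl
        rw [hgx] at this
        exact this
      · -- opNorm g = 1
        have hmem1 : (1:ℝ) ∈ {M : ℝ | 0 < M ∧ ∀ y : X, ‖g y‖ ≤ M * S.N (Fin.cons y b)} :=
          ⟨one_pos, fun y => by rw [one_mul, Real.norm_eq_abs]; exact habs y⟩
        have hop : S.opNorm b (⇑g) = 1 := by
          rw [NNormSp.opNorm]
          apply le_antisymm
          · exact csInf_le ⟨0, fun M hM => le_of_lt hM.1⟩ hmem1
          · apply le_csInf ⟨1, hmem1⟩
            intro M hM
            have := hM.2 x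
            rw [Real.norm_eq_abs, hgx, abs_of_pos hpx] at this
            nlinarith [hM.1]
        rw [hop, Real.norm_eq_abs, hgx, abs_of_pos hpx, div_one]
    apply le_antisymm
    · exact le_csSup ⟨p x, fun r ⟨T, hT1, hT2, hT3, hT4⟩ => hT4 ▸ key T hT1 hT2 hT3⟩ hgmem
    · exact csSup_le ⟨p x, hgmem⟩ fun r ⟨T, hT1, hT2, hT3, hT4⟩ => hT4 ▸ key T hT1 hT2 hT3
end
end

section
/- Let W be a subspace of a real linear n-normed space X and x₁ ∈ X \ W such that x₁, b₂,…,bₙ are linearly independent, and suppose h = inf{‖x₁ − x, b₂,…,bₙ‖ : x ∈ W} > 0. Then there exists a bounded b-linear functional T on X × ⟨b₂⟩ × ⋯ × ⟨bₙ⟩ with T(x₁, b₂,…,bₙ) = h, T(x, b₂,…,bₙ) = 0 for all x ∈ W, and ‖T‖ = 1. -/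
noncomputable section
open Filter Topology

theorem separating_functional_for_subspace
    {n : ℕ} {X : Type*} [AddCommGroup X] [Module ℝ X]
    (S : NNormSp n ℝ X) (b : Fin n → X) (W : Submodule ℝ X)
    (x₁ : X) (hx₁ : x₁ ∉ W) (hind : LinearIndependent ℝ (Fin.cons x₁ b))
    (h : ℝ)
    (hdef : h = sInf {r : ℝ | ∃ x ∈ W, r = S.N (Fin.cons (x₁ - x) b)})
    (hpos : 0 < h) :
    ∃ T : X → ℝ, IsBLinear T ∧ S.IsBounded b T ∧
      T x₁ = h ∧ (∀ x ∈ W, T x = 0) ∧ S.opNorm b T = 1 := by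
  set p : X → ℝ := fun x => S.N (Fin.cons x b) with hp
  have p_smul : ∀ (c : ℝ) (x : X), p (c • x) = |c| * p x := by
    intro c x; simpa using S.smul_first c x b
  have p_add : ∀ x y, p (x + y) ≤ p x + p y := fun x y => S.add_first x y b
  have p_zero : p 0 = 0 := by
    have := p_smul 0 0; simpa using this
  have p_neg : ∀ x, p (-x) = p x := by
    intro x
    have := p_smul (-1) x; simpa using this
  have p_nonneg : ∀ x, 0 ≤ p x := by
    intro x
    have h1 := p_add x (-x)
    rw [add_neg_cancel, p_zero, p_neg] at h1
    linarith
  have p_hom : ∀ c : ℝ, 0 < c → ∀ x, p (c • x) = c * p x := by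
    intro c hc x; rw [p_smul, abs_of_pos hc]
  -- h is a lower bound for p (x₁ - x), x ∈ W
  have hlb : ∀ x ∈ W, h ≤ p (x₁ - x) := by
    intro x hxW
    rw [hdef]
    apply csInf_le
    · exact ⟨0, by rintro r ⟨y, hy, rfl⟩; exact p_nonneg _⟩
    · exact ⟨x, hxW, rfl⟩
  -- partial linear map
  set f0 : X →ₗ.[ℝ] ℝ := ⟨W, 0⟩ with hf0
  have hx₁' : x₁ ∉ f0.domain := hx₁
  set F : X →ₗ.[ℝ] ℝ := f0.supSpanSingleton x₁ h hx₁' with hF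
  have hFdom : F.domain = W ⊔ ℝ ∙ x₁ := rfl
  have hFle : ∀ z : F.domain, F z ≤ p z := by
    rintro ⟨z, hz0⟩
    have hz : z ∈ W ⊔ ℝ ∙ x₁ := hFdom ▸ hz0
    rcases Submodule.mem_sup.1 hz with ⟨w, hw, s, hs, rfl⟩
    rcases Submodule.mem_span_singleton.1 hs with ⟨c, rfl⟩
    have h0 : f0 ⟨w, hw⟩ = 0 := rfl
    have happ : F ⟨w + c • x₁, hz0⟩ = c * h := by
      have h1 : F ⟨w + c • x₁, hz0⟩ = f0 ⟨w, hw⟩ + c • h :=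
        LinearPMap.supSpanSingleton_apply_mk f0 x₁ h hx₁' w hw c
      rw [h1, h0]; simp
    rw [happ]
    show c * h ≤ p (w + c • x₁)
    rcases lt_trichotomy c 0 with hc | hc | hc
    · have hneg : c * h < 0 := mul_neg_of_neg_of_pos hc hpos
      exact le_trans hneg.le (p_nonneg _)
    · subst hc; simpa using p_nonneg (w + (0:ℝ) • x₁)
    · have hxw : w + c • x₁ = c • (x₁ - -(c⁻¹ • w)) := by
        field_simp [smul_smul, smul_sub]
        match_scalars <;> field_simp
      rw [hxw, p_hom c hc]
      have hmem : -(c⁻¹ • w) ∈ W := W.neg_mem (W.smul_mem _ hw)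
      have := hlb _ hmem
      nlinarith [this]
  obtain ⟨g, hg1, hg2⟩ := exists_extension_of_le_sublinear F p p_hom p_add hFle
  have habs : ∀ x, |g x| ≤ p x := by
    intro x
    refine abs_le.2 ⟨?_, hg2 x⟩
    have h1 := hg2 (-x)
    rw [map_neg, p_neg] at h1
    linarith
  have hW0 : ∀ x ∈ W, g x = 0 := by
    intro x hxW
    have hmem : x ∈ F.domain := hFdom ▸ Submodule.mem_sup_left hxW
    have := hg1 ⟨x, hmem⟩
    have happ : F ⟨x, hmem⟩ = 0 := by
      have heq : (⟨x, hmem⟩ : F.domain) = ⟨x + (0:ℝ) • x₁, by simpa using hmem⟩ := by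
        ext; simp
      rw [heq]
      have h0 : f0 ⟨x, hxW⟩ = 0 := rfl
      calc F ⟨x + (0:ℝ) • x₁, by simpa using hmem⟩
          = f0 ⟨x, hxW⟩ + (0:ℝ) • h := LinearPMap.supSpanSingleton_apply_mk f0 x₁ h hx₁' x hxW 0
        _ = 0 := by rw [h0]; simp
    simpa [happ] using this
  have hgx₁ : g x₁ = h := by
    have hmem : x₁ ∈ F.domain := hFdom ▸ Submodule.mem_sup_right
      (Submodule.mem_span_singleton.2 ⟨1, one_smul _ _⟩)
    have := hg1 ⟨x₁, hmem⟩
    have happ : F ⟨x₁, hmem⟩ = h := by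
      have heq : (⟨x₁, hmem⟩ : F.domain) = ⟨(0:X) + (1:ℝ) • x₁, by simpa using hmem⟩ := by
        ext; simp
      rw [heq]
      have h0 : f0 ⟨(0:X), W.zero_mem⟩ = 0 := rfl
      calc F ⟨(0:X) + (1:ℝ) • x₁, by simpa using hmem⟩
          = f0 ⟨(0:X), W.zero_mem⟩ + (1:ℝ) • h :=
            LinearPMap.supSpanSingleton_apply_mk f0 x₁ h hx₁' 0 W.zero_mem 1
        _ = h := by rw [h0]; simp
    simpa [happ] using this
  refine ⟨g, ⟨fun x y => map_add g x y, fun c x => by simp [map_smul]⟩, ⟨1, one_pos, ?_⟩,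
    hgx₁, hW0, ?_⟩
  · intro x; simpa using habs x
  · -- opNorm = 1
    have hmem1 : (1:ℝ) ∈ {M : ℝ | 0 < M ∧ ∀ x : X, ‖g x‖ ≤ M * S.N (Fin.cons x b)} := by
      refine ⟨one_pos, fun x => ?_⟩
      simpa using habs x
    have hge : ∀ M ∈ {M : ℝ | 0 < M ∧ ∀ x : X, ‖g x‖ ≤ M * S.N (Fin.cons x b)}, (1:ℝ) ≤ M := by
      rintro M ⟨hM, hMle⟩
      by_contra hcon
      push_neg at hcon
      -- h/M is a lower bound of the set defining h
      have hlow : ∀ r ∈ {r : ℝ | ∃ x ∈ W, r = S.N (Fin.cons (x₁ - x) b)}, h / M ≤ r := by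
        rintro r ⟨x, hxW, rfl⟩
        have hT : g (x₁ - x) = h := by
          rw [map_sub, hgx₁, hW0 x hxW, sub_zero]
        have := hMle (x₁ - x)
        rw [hT] at this
        have : h ≤ M * S.N (Fin.cons (x₁ - x) b) := by
          calc h = |h| := (abs_of_pos hpos).symm
          _ ≤ M * S.N (Fin.cons (x₁ - x) b) := by simpa using this
        rw [div_le_iff₀ hM]
        nlinarith
      have hfin : h / M ≤ h := by
        conv_rhs => rw [hdef]
        exact le_csInf ⟨_, ⟨0, W.zero_mem, rfl⟩⟩ hlow
      rw [div_le_iff₀ hM] at hfin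
      nlinarith
    exact le_antisymm (csInf_le ⟨1, hge⟩ hmem1) (le_csInf ⟨1, hmem1⟩ hge)
end
end
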